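/- Let f be an orientation-preserving homeomorphism of ℝ with f(x) = x + 1, let I = [x₀, x₀+1], and let h : I → I be an orientation-preserving homeomorphism fixing the endpoints. Then for each ε ∈ {+1, -1} there exists a unique orientation-preserving homeomorphism g of ℝ with g|_I = h and f ∘ g ∘ f⁻¹ = g^ε; it is given on fⁿ(I) by g = fⁿ ∘ h^{εⁿ} ∘ f⁻ⁿ. -/

import Mathlib

open Set

namespace Stmt17Aux

variable (x₀ : ℝ)

lemma mem_aux (y : ℝ) : y - (⌊y - x₀⌋ : ℝ) ∈ Ico x₀ (x₀ + 1) :=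
  ⟨by linarith [Int.floor_le (y - x₀)], by linarith [Int.lt_floor_add_one (y - x₀)]⟩

lemma fix_bot (k : Icc x₀ (x₀+1) ≃o Icc x₀ (x₀+1)) (u : Icc x₀ (x₀+1))
    (hu : (u : ℝ) = x₀) : (k u : ℝ) = x₀ := by
  have hb : ∀ v : Icc x₀ (x₀+1), u ≤ v := fun v =>
    Subtype.coe_le_coe.1 (by rw [hu]; exact v.2.1)
  have h1 : k u ≤ u := by
    have := k.monotone (hb (k.symm u))
    rwa [k.apply_symm_apply] at this
  have h2 : k u = u := le_antisymm h1 (hb _)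
  rw [h2, hu]

lemma fix_top (k : Icc x₀ (x₀+1) ≃o Icc x₀ (x₀+1)) (u : Icc x₀ (x₀+1))
    (hu : (u : ℝ) = x₀ + 1) : (k u : ℝ) = x₀ + 1 := by
  have hb : ∀ v : Icc x₀ (x₀+1), v ≤ u := fun v =>
    Subtype.coe_le_coe.1 (by rw [hu]; exact v.2.2)
  have h1 : u ≤ k u := by
    have := k.monotone (hb (k.symm u))
    rwa [k.apply_symm_apply] at this
  have h2 : k u = u := le_antisymm (hb _) h1
  rw [h2, hu]

lemma img_mem (k : Icc x₀ (x₀+1) ≃o Icc x₀ (x₀+1)) {t : ℝ} (ht : t ∈ Ico x₀ (x₀+1)) :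
    (k ⟨t, Ico_subset_Icc_self ht⟩ : ℝ) ∈ Ico x₀ (x₀+1) := by
  refine ⟨(k _).2.1, ?_⟩
  have hlt : (⟨t, Ico_subset_Icc_self ht⟩ : Icc x₀ (x₀+1)) <
      ⟨x₀ + 1, right_mem_Icc.2 (by linarith [ht.1, ht.2])⟩ :=
    Subtype.coe_lt_coe.1 ht.2
  have := k.strictMono hlt
  calc (k ⟨t, Ico_subset_Icc_self ht⟩ : ℝ) < (k ⟨x₀+1, _⟩ : ℝ) := Subtype.coe_lt_coe.2 this
    _ = x₀ + 1 := fix_top x₀ k _ rfl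

noncomputable def gen (K : ℤ → (Icc x₀ (x₀+1) ≃o Icc x₀ (x₀+1))) (y : ℝ) : ℝ :=
  (K ⌊y - x₀⌋ ⟨y - (⌊y - x₀⌋ : ℝ), Ico_subset_Icc_self (mem_aux x₀ y)⟩ : ℝ) + ⌊y - x₀⌋

lemma gen_eval (K : ℤ → (Icc x₀ (x₀+1) ≃o Icc x₀ (x₀+1))) {t : ℝ}
    (ht : t ∈ Ico x₀ (x₀+1)) (n : ℤ) :
    gen x₀ K (t + n) = (K n ⟨t, Ico_subset_Icc_self ht⟩ : ℝ) + n := by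
  have hn : ⌊t + (n : ℝ) - x₀⌋ = n := by
    have h0 : ⌊t - x₀⌋ = 0 := Int.floor_eq_zero_iff.2 ⟨by linarith [ht.1], by linarith [ht.2]⟩
    rw [show t + (n:ℝ) - x₀ = (t - x₀) + n by ring, Int.floor_add_intCast, h0, zero_add]
  unfold gen
  simp only [hn, add_sub_cancel_right]

lemma gen_strictMono (K : ℤ → (Icc x₀ (x₀+1) ≃o Icc x₀ (x₀+1))) :
    StrictMono (gen x₀ K) := by
  intro y y' hyy
  have hmem := mem_aux x₀ y
  have hmem' := mem_aux x₀ y'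
  have hle : ⌊y - x₀⌋ ≤ ⌊y' - x₀⌋ := Int.floor_le_floor (by linarith)
  unfold gen
  rcases lt_or_eq_of_le hle with hlt | heq
  · have h1 : (K ⌊y - x₀⌋ ⟨y - (⌊y - x₀⌋:ℝ), Ico_subset_Icc_self (mem_aux x₀ y)⟩ : ℝ) < x₀ + 1 :=
      (img_mem x₀ (K ⌊y - x₀⌋) hmem).2
    have h2 : x₀ ≤ (K ⌊y' - x₀⌋ ⟨y' - (⌊y' - x₀⌋:ℝ), Ico_subset_Icc_self (mem_aux x₀ y')⟩ : ℝ) :=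
      (K ⌊y' - x₀⌋ _).2.1
    have h3 : (⌊y - x₀⌋ : ℝ) + 1 ≤ ⌊y' - x₀⌋ := by exact_mod_cast hlt
    linarith
  · simp only [heq]
    have h4 : y - (⌊y' - x₀⌋:ℝ) < y' - (⌊y' - x₀⌋:ℝ) := by linarith
    have h5 := (K ⌊y' - x₀⌋).strictMono (Subtype.mk_lt_mk.2 h4 :
      (⟨y - (⌊y' - x₀⌋:ℝ), heq ▸ Ico_subset_Icc_self (mem_aux x₀ y)⟩ : Icc x₀ (x₀+1)) <
      ⟨y' - (⌊y' - x₀⌋:ℝ), Ico_subset_Icc_self (mem_aux x₀ y')⟩)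
    exact add_lt_add_left (Subtype.coe_lt_coe.2 h5) _

lemma gen_rightInverse (K : ℤ → (Icc x₀ (x₀+1) ≃o Icc x₀ (x₀+1))) :
    Function.RightInverse (gen x₀ fun n => (K n).symm) (gen x₀ K) := by
  intro y
  have hmem := mem_aux x₀ y
  have h1 : gen x₀ (fun n => (K n).symm) y =
      ((K ⌊y - x₀⌋).symm ⟨y - (⌊y - x₀⌋:ℝ), Ico_subset_Icc_self hmem⟩ : ℝ) + ⌊y - x₀⌋ := rfl
  rw [h1, gen_eval x₀ K (img_mem x₀ (K ⌊y - x₀⌋).symm hmem) ⌊y - x₀⌋,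
    Subtype.coe_eta, OrderIso.apply_symm_apply]
  ring

end Stmt17Aux

open Stmt17Aux

open Set in
/-- Let `f` be the translation `x ↦ x + 1`, `I = [x₀, x₀+1]`, and `h` an
orientation-preserving homeomorphism of `I` (fixing the endpoints). For `ε ∈ {1, -1}`
there is a unique orientation-preserving homeomorphism `g` of ℝ with `g|_I = h` and
`f ∘ g ∘ f⁻¹ = g^ε`, given on `fⁿ(I)` by `g = fⁿ ∘ h^{εⁿ} ∘ f⁻ⁿ`. -/
theorem stmt_17 (f : ℝ ≃o ℝ) (hf : ∀ x : ℝ, f x = x + 1) (x₀ : ℝ)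
    (h : Icc x₀ (x₀ + 1) ≃o Icc x₀ (x₀ + 1)) (ε : ℤ) (hε : ε = 1 ∨ ε = -1) :
    ∃! g : ℝ ≃o ℝ,
      (∀ y : ℝ, ∀ hy : y ∈ Icc x₀ (x₀ + 1), g y = (h ⟨y, hy⟩ : ℝ)) ∧
      (∀ y : ℝ, f (g (f.symm y)) = if ε = 1 then g y else g.symm y) ∧
      (∀ n : ℤ, ∀ y : ℝ, ∀ hy : y ∈ Icc x₀ (x₀ + 1),
        g (y + n) =
          (if ε = 1 ∨ Even n then (h ⟨y, hy⟩ : ℝ) else (h.symm ⟨y, hy⟩ : ℝ)) + n) := by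
  classical
  set K : ℤ → (Icc x₀ (x₀+1) ≃o Icc x₀ (x₀+1)) :=
    fun n => if ε = 1 ∨ Even n then h else h.symm with hK
  set g : ℝ ≃o ℝ := StrictMono.orderIsoOfRightInverse (gen x₀ K) (gen_strictMono x₀ K)
      (gen x₀ fun n => (K n).symm) (gen_rightInverse x₀ K) with hgdef
  have hg : ∀ y, g y = gen x₀ K y := fun _ => rfl
  have hgsymm : ∀ y, g.symm y = gen x₀ (fun n => (K n).symm) y := by
    intro y
    apply g.injective
    rw [g.apply_symm_apply, hg, gen_rightInverse x₀ K y]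
  have prop3 : ∀ n : ℤ, ∀ y : ℝ, ∀ hy : y ∈ Icc x₀ (x₀ + 1),
      g (y + n) =
        (if ε = 1 ∨ Even n then (h ⟨y, hy⟩ : ℝ) else (h.symm ⟨y, hy⟩ : ℝ)) + n := by
    intro n y hy
    rcases eq_or_lt_of_le hy.2 with heq | hlt
    · have h1 : y + (n:ℝ) = x₀ + ((n+1 : ℤ):ℝ) := by push_cast; linarith
      have hx0 : x₀ ∈ Ico x₀ (x₀+1) := ⟨le_refl x₀, by linarith⟩
      rw [hg, h1, gen_eval x₀ K hx0 (n+1)]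
      have hb := fix_bot x₀ (K (n+1)) ⟨x₀, Ico_subset_Icc_self hx0⟩ rfl
      have ht1 := fix_top x₀ h ⟨y, hy⟩ heq
      have ht2 := fix_top x₀ h.symm ⟨y, hy⟩ heq
      rw [hb]
      split_ifs with hc
      · rw [ht1]; push_cast; ring
      · rw [ht2]; push_cast; ring
    · have hyIco : y ∈ Ico x₀ (x₀+1) := ⟨hy.1, hlt⟩
      rw [hg, gen_eval x₀ K hyIco n]
      by_cases hc : ε = 1 ∨ Even n <;> simp [hK, hc]
  have prop1 : ∀ y : ℝ, ∀ hy : y ∈ Icc x₀ (x₀ + 1), g y = (h ⟨y, hy⟩ : ℝ) := by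
    intro y hy
    have := prop3 0 y hy
    simpa using this
  have hfs : ∀ y : ℝ, f.symm y = y - 1 := by
    intro y; apply f.injective; rw [f.apply_symm_apply, hf]; ring
  have prop2 : ∀ y : ℝ, f (g (f.symm y)) = if ε = 1 then g y else g.symm y := by
    intro y
    have hmem := mem_aux x₀ y
    have h1 : f.symm y = (y - (⌊y - x₀⌋:ℝ)) + ((⌊y - x₀⌋ - 1 : ℤ):ℝ) := by
      rw [hfs]; push_cast; ring
    have h2 : y = (y - (⌊y - x₀⌋:ℝ)) + ((⌊y - x₀⌋ : ℤ):ℝ) := by push_cast; ring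
    rw [h1, hg, gen_eval x₀ K hmem (⌊y - x₀⌋ - 1), hf]
    split_ifs with hε1
    · rw [hg]
      conv_rhs => rw [h2]
      rw [gen_eval x₀ K hmem ⌊y - x₀⌋]
      simp only [hK, hε1, true_or, if_true]
      push_cast; ring
    · rw [hgsymm]
      conv_rhs => rw [h2]
      rw [gen_eval x₀ (fun n => (K n).symm) hmem ⌊y - x₀⌋]
      have hpar : (Even (⌊y - x₀⌋ - 1)) ↔ ¬ Even ⌊y - x₀⌋ := Int.even_sub_one
      by_cases hev : Even ⌊y - x₀⌋
      · simp only [hK, hε1, hev, hpar.not_left]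
        simp [hev, hpar, hε1]
        push_cast; ring
      · simp only [hK]
        simp [hev, hpar, hε1]
        push_cast; ring
  refine ⟨g, ⟨prop1, prop2, prop3⟩, ?_⟩
  rintro g' ⟨hp1, hp2, hp3⟩
  have : ∀ y : ℝ, g' y = g y := by
    intro y
    have hmem := mem_aux x₀ y
    have hIcc := Ico_subset_Icc_self hmem
    have hyeq : y = (y - (⌊y - x₀⌋:ℝ)) + ((⌊y - x₀⌋ : ℤ):ℝ) := by push_cast; ring
    rw [hyeq, hp3 _ _ hIcc, ← prop3 _ _ hIcc]
  exact OrderIso.ext (funext this)
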